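/- Let n be even, let p be a permutation of {1,...,n}, and let q be obtained from p by inserting n+1 into a B-gap of p. Then T2(q) = T2(p) + 1, T1(q) = T1(p), and T3(q) = T3(p). -/

import Mathlib

open List
open scoped Classical

/-- adjacent pairs of a list -/
def pairs (l : List ℕ) : List (ℕ × ℕ) := l.zip l.tail

/-- `l` is a permutation (as a word) of `{1, ..., n}` -/
def IsPermOf (n : ℕ) (l : List ℕ) : Prop := l.Perm (List.range' 1 n)

def T1 (l : List ℕ) : ℕ := (pairs l).countP (fun q => decide (q.2 < q.1 ∧ Odd q.1 ∧ Even q.2))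
def T2 (l : List ℕ) : ℕ := (pairs l).countP (fun q => decide (q.1 < q.2 ∧ Odd q.1 ∧ Odd q.2))
def T3 (l : List ℕ) : ℕ := (pairs l).countP (fun q => decide (q.2 < q.1 ∧ Odd q.1 ∧ Odd q.2))
def S10 (l : List ℕ) : ℕ := (pairs l).countP (fun q => decide (q.2 < q.1 ∧ Odd q.1))
def S12 (l : List ℕ) : ℕ := (pairs l).countP (fun q => decide (Odd q.1 ∧ Odd q.2))

/-- largest `i` such that the values `1, ..., i` appear in left-to-right order in `l` -/
def S17 (l : List ℕ) : ℕ :=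
  Nat.findGreatest (fun i => ∀ j < i, 1 ≤ j → l.idxOf j < l.idxOf (j + 1)) l.length

def statA (l : List ℕ) : ℕ :=
  (pairs l).countP (fun q => decide (Even q.1 ∧ Even q.2)) + (if Even (l.headD 1) then 1 else 0)
def statB (l : List ℕ) : ℕ :=
  (pairs l).countP (fun q => decide (q.2 < q.1 ∧ Odd q.1)) + (if Odd (l.getLastD 0) then 1 else 0)
def statC (l : List ℕ) : ℕ :=
  (pairs l).countP (fun q => decide ((Even q.1 ∧ Odd q.2) ∨ (q.1 < q.2 ∧ Odd q.1 ∧ Odd q.2))) +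
    (if Odd (l.headD 0) then 1 else 0)
def statD (l : List ℕ) : ℕ :=
  (pairs l).countP (fun q => decide (q.1 < q.2 ∧ Odd q.1 ∧ Even q.2))
def statE (l : List ℕ) : ℕ := if Even (l.getLastD 1) then 1 else 0

/-- the `i`-th entry of `l` (0-indexed), default 0 -/
def entry (l : List ℕ) (i : ℕ) : ℕ := l.getD i 0

/-- inserting `m` at gap `j` of `l` -/
def insertGap (l : List ℕ) (j : ℕ) (m : ℕ) : List ℕ := l.take j ++ m :: l.drop j

def IsAGap (l : List ℕ) (j : ℕ) : Prop :=
  (j = 0 ∧ Even (l.headD 1)) ∨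
  (1 ≤ j ∧ j < l.length ∧ Even (entry l (j - 1)) ∧ Even (entry l j))

def IsBGap (l : List ℕ) (j : ℕ) : Prop :=
  (1 ≤ j ∧ j < l.length ∧ entry l j < entry l (j - 1) ∧ Odd (entry l (j - 1))) ∨
  (j = l.length ∧ Odd (l.getLastD 0))

def IsCGap (l : List ℕ) (j : ℕ) : Prop :=
  (j = 0 ∧ Odd (l.headD 0)) ∨
  (1 ≤ j ∧ j < l.length ∧ ((Even (entry l (j - 1)) ∧ Odd (entry l j)) ∨
    (entry l (j - 1) < entry l j ∧ Odd (entry l (j - 1)) ∧ Odd (entry l j))))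

def IsDGap (l : List ℕ) (j : ℕ) : Prop :=
  1 ≤ j ∧ j < l.length ∧ entry l (j - 1) < entry l j ∧ Odd (entry l (j - 1)) ∧ Even (entry l j)

def IsEGap (l : List ℕ) (j : ℕ) : Prop := j = l.length ∧ Even (l.getLastD 1)

/-- the word `p_1 p_2 ... p_n` (values in `{1,...,n}`) of a permutation of `Fin n` -/
def word (n : ℕ) (p : Equiv.Perm (Fin n)) : List ℕ := List.ofFn (fun i => (p i : ℕ) + 1)

lemma pairs_cons_cons (x y : ℕ) (t : List ℕ) : pairs (x :: y :: t) = (x,y) :: pairs (y :: t) := rfl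

lemma pairs_append_cons : ∀ (xs : List ℕ) (a : ℕ) (ys : List ℕ),
    pairs (xs ++ a :: ys) = pairs (xs ++ [a]) ++ pairs (a :: ys)
  | [], a, ys => by simp [pairs]
  | [x], a, ys => by simp [pairs_cons_cons, pairs]
  | x :: x' :: xs, a, ys => by
    rw [cons_append, cons_append, cons_append, cons_append, pairs_cons_cons, pairs_cons_cons,
      ← cons_append, ← cons_append, pairs_append_cons (x'::xs) a ys]
    rfl

lemma decomp (l : List ℕ) (k : ℕ) (h2 : k + 1 < l.length) (m : ℕ) :
    l = l.take k ++ entry l k :: entry l (k+1) :: l.drop (k+2) ∧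
    insertGap l (k+1) m = (l.take k ++ [entry l k]) ++ m :: entry l (k+1) :: l.drop (k+2) := by
  have hj1 : k < l.length := by omega
  have e1 : entry l k = l[k] := by simp [entry, List.getElem?_eq_getElem hj1]
  have e2 : entry l (k+1) = l[k+1] := by simp [entry, List.getElem?_eq_getElem h2]
  have d1 : l.drop k = l[k] :: l.drop (k+1) := List.drop_eq_getElem_cons hj1
  have d2 : l.drop (k+1) = l[k+1] :: l.drop (k+2) := List.drop_eq_getElem_cons h2
  constructor
  · rw [e1, e2]
    conv_lhs => rw [← List.take_append_drop k l]
    rw [d1, d2]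
  · unfold insertGap
    rw [e1, e2, d2]
    have : l.take (k+1) = l.take k ++ [l[k]] := by
      rw [List.take_succ]; simp [List.getElem?_eq_getElem hj1]
    rw [this]

theorem stmt8 (n : ℕ) (hn : Even n) (l : List ℕ) (hl : IsPermOf n l) (j : ℕ) (hj : j ≤ n)
    (hgap : IsBGap l j) (q : List ℕ) (hq : q = insertGap l j (n + 1)) :
    T2 q = T2 l + 1 ∧ T1 q = T1 l ∧ T3 q = T3 l := by
  have hon : Odd (n + 1) := hn.add_one
  have hmem : ∀ x ∈ l, x ≤ n := by
    intro x hx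
    have := hl.mem_iff.mp hx
    simp [List.mem_range'_1] at this
    omega
  rcases hgap with ⟨h1, h2, hlt, hodd⟩ | ⟨hj', hlast⟩
  · obtain ⟨k, rfl⟩ : ∃ k, j = k + 1 := ⟨j - 1, by omega⟩
    simp only [Nat.add_sub_cancel] at hlt hodd
    obtain ⟨hdl, hdq⟩ := decomp l k h2 (n + 1)
    set t := l.take k
    set a := entry l k
    set b := entry l (k+1)
    set r := l.drop (k+2)
    have ha : a ≤ n := hmem a (by rw [hdl]; simp)
    have hb : b ≤ n := hmem b (by rw [hdl]; simp)
    rw [hdq, List.append_assoc, List.singleton_append] at hq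
    have pl : pairs l = pairs (t ++ [a]) ++ (a, b) :: pairs (b :: r) := by
      rw [hdl, pairs_append_cons, pairs_cons_cons]
    have pq : pairs q = pairs (t ++ [a]) ++ (a, n+1) :: (n+1, b) :: pairs (b :: r) := by
      rw [hq, pairs_append_cons, pairs_cons_cons, pairs_cons_cons]
    have f1 : ¬ (n + 1 < b) := by omega
    have f2 : ¬ (n + 1 < a) := by omega
    have f3 : ¬ (a < b) := by omega
    have f4 : a < n + 1 := by omega
    have f5 : b < n + 1 := by omega
    refine ⟨?_, ?_, ?_⟩ <;>
      simp only [T1, T2, T3, pl, pq, List.countP_append, List.countP_cons,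
        decide_eq_true_eq] <;>
      rcases Nat.even_or_odd b with hb2 | hb2 <;>
      simp [hodd, hon, hb2, f1, f2, f3, f4, f5, hlt, Nat.not_even_iff_odd,
        Nat.not_odd_iff_even] <;> try omega
  · have hne : l ≠ [] := by rintro rfl; simp at hlast
    have hlastd : l.getLastD 0 = l.getLast hne := by
      rw [List.getLastD_eq_getLast?, List.getLast?_eq_getLast hne]; rfl
    rw [hlastd] at hlast
    set a := l.getLast hne with hadef
    have ha : a ≤ n := hmem a (List.getLast_mem hne)
    have hql : q = l ++ [n+1] := by
      rw [hq, hj']; simp [insertGap]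
    have hdl : l = l.dropLast ++ [a] := (List.dropLast_append_getLast hne).symm
    have pq : pairs q = pairs l ++ [(a, n+1)] := by
      conv_lhs => rw [hql, hdl, List.append_assoc, List.singleton_append,
        pairs_append_cons, pairs_cons_cons]
      rw [← hdl]; rfl
    have f1 : ¬ (n + 1 < a) := by omega
    have f4 : a < n + 1 := by omega
    refine ⟨?_, ?_, ?_⟩ <;>
      simp [T1, T2, T3, pq, List.countP_append, List.countP_cons, decide_eq_true_eq,
        hlast, hon, f1, f4, Nat.not_even_iff_odd] <;> try omega
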